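/- Let f, g : H → ℝ ∪ {∞} be closed, proper, convex functions on a real Hilbert space H and let γ > 0. Let z* be a fixed point of T_PRS and x* := prox_{γg}(z*). Then for every x_f in the effective domain of f and every x_g in the effective domain of g: f(x_f) + g(x_g) − f(x*) − g(x*) ≥ (1/γ)·⟨x_g − x_f, z* − x*⟩. -/

import Mathlib

lemma prox_subgrad
    {H : Type*} [NormedAddCommGroup H] [InnerProductSpace ℝ H]
    (g : H → EReal) (hg_bot : ∀ x, g x ≠ ⊥)
    (hg_conv : ∀ x y : H, ∀ a b : ℝ, 0 ≤ a → 0 ≤ b → a + b = 1 →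
      g (a • x + b • y) ≤ (a : EReal) * g x + (b : EReal) * g y)
    (γ : ℝ) (hγ : 0 < γ) (x p : H)
    (hmin : ∀ y : H, g p + ((1 / (2 * γ) * ‖p - x‖ ^ 2 : ℝ) : EReal) ≤
        g y + ((1 / (2 * γ) * ‖y - x‖ ^ 2 : ℝ) : EReal))
    (w : H) (hw : g w ≠ ⊤) :
    ∃ r s : ℝ, g p = (r : EReal) ∧ g w = (s : EReal) ∧
      r + 1 / γ * inner ℝ (x - p) (w - p) ≤ s := by
  -- g p is finite
  have hwne : g w ≠ ⊥ := hg_bot w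
  have hpt : g p ≠ ⊤ := by
    intro htop
    have := hmin w
    rw [htop] at this
    rw [EReal.top_add_of_ne_bot (EReal.coe_ne_bot _)] at this
    have h2 : g w + ((1 / (2 * γ) * ‖w - x‖ ^ 2 : ℝ) : EReal) < ⊤ :=
      EReal.add_lt_top hw (EReal.coe_ne_top _)
    exact absurd (top_le_iff.mp this) (ne_of_lt h2)
  set r : ℝ := (g p).toReal with hr
  set s : ℝ := (g w).toReal with hs
  have hgp : g p = (r : EReal) := (EReal.coe_toReal hpt (hg_bot p)).symm
  have hgw : g w = (s : EReal) := (EReal.coe_toReal hw hwne).symm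
  refine ⟨r, s, hgp, hgw, ?_⟩
  set d : H := w - p with hd
  set c : ℝ := ‖d‖ ^ 2 / (2 * γ) with hc
  have hc0 : 0 ≤ c := by positivity
  -- for each t ∈ (0,1], r + (1/γ)⟨x-p,d⟩ ≤ s + t * c
  have key : ∀ t : ℝ, 0 < t → t ≤ 1 → r + 1 / γ * inner ℝ (x - p) d ≤ s + t * c := by
    intro t ht ht1
    have hy : (1 - t) • p + t • w = p + t • d := by
      rw [hd]; module
    have hconv := hg_conv p w (1 - t) t (by linarith) (le_of_lt ht) (by ring)
    rw [hy, hgp, hgw] at hconv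
    have hconv' : g (p + t • d) ≤ (((1 - t) * r + t * s : ℝ) : EReal) := by
      calc g (p + t • d) ≤ ((1 - t : ℝ) : EReal) * (r : EReal) + (t : EReal) * (s : EReal) := hconv
        _ = (((1 - t) * r + t * s : ℝ) : EReal) := by
            rw [← EReal.coe_mul, ← EReal.coe_mul, ← EReal.coe_add]
    have hmin' := hmin (p + t • d)
    rw [hgp] at hmin'
    have hmin'' : ((r + 1 / (2 * γ) * ‖p - x‖ ^ 2 : ℝ) : EReal) ≤
        (((1 - t) * r + t * s + 1 / (2 * γ) * ‖p + t • d - x‖ ^ 2 : ℝ) : EReal) := by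
      calc ((r + 1 / (2 * γ) * ‖p - x‖ ^ 2 : ℝ) : EReal)
          = (r : EReal) + ((1 / (2 * γ) * ‖p - x‖ ^ 2 : ℝ) : EReal) := by
            rw [← EReal.coe_add]
        _ ≤ g (p + t • d) + ((1 / (2 * γ) * ‖p + t • d - x‖ ^ 2 : ℝ) : EReal) := hmin'
        _ ≤ (((1 - t) * r + t * s : ℝ) : EReal) +
              ((1 / (2 * γ) * ‖p + t • d - x‖ ^ 2 : ℝ) : EReal) := by
            exact add_le_add_left hconv' _
        _ = (((1 - t) * r + t * s + 1 / (2 * γ) * ‖p + t • d - x‖ ^ 2 : ℝ) : EReal) := by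
            rw [← EReal.coe_add]
    have hreal := EReal.coe_le_coe_iff.mp hmin''
    -- expand the norm
    have hnorm : ‖p + t • d - x‖ ^ 2 =
        ‖p - x‖ ^ 2 + 2 * (t * inner ℝ (p - x) d) + t ^ 2 * ‖d‖ ^ 2 := by
      have h1 : p + t • d - x = (p - x) + t • d := by abel
      rw [h1, @norm_add_sq_real, real_inner_smul_right, norm_smul, Real.norm_eq_abs,
        abs_of_pos ht]
      ring
    rw [hnorm] at hreal
    have hip : (inner ℝ (x - p) d : ℝ) = - inner ℝ (p - x) d := by
      rw [← inner_neg_left]; congr 1; abel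
    rw [hip]
    -- from hreal: r + q ≤ (1-t)r + ts + q + (t/γ)⟨p-x,d⟩ + t²‖d‖²/(2γ)
    have ht' : t * r ≤ t * s + t * (1 / γ * inner ℝ (p - x) d) + t * (t * c) := by
      have : 1 / (2 * γ) * (‖p - x‖ ^ 2 + 2 * (t * inner ℝ (p - x) d) + t ^ 2 * ‖d‖ ^ 2)
          = 1 / (2 * γ) * ‖p - x‖ ^ 2 + t * (1 / γ * inner ℝ (p - x) d) + t * (t * c) := by
        rw [hc]; field_simp
      nlinarith [hreal]
    have := (mul_le_mul_iff_right₀ ht).mp (by linarith : t * r ≤ t * (s + 1 / γ * inner ℝ (p - x) d + t * c))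
    linarith
  -- take the limit t → 0⁺ via epsilon argument
  have heps : ∀ ε : ℝ, 0 < ε → r + 1 / γ * inner ℝ (x - p) d ≤ s + ε := by
    intro ε hε
    rcases le_or_gt c 0 with hcle | hcpos
    · have := key 1 one_pos le_rfl
      nlinarith
    · set t : ℝ := min 1 (ε / c) with htdef
      have ht0 : 0 < t := lt_min one_pos (div_pos hε hcpos)
      have ht1 : t ≤ 1 := min_le_left _ _
      have := key t ht0 ht1
      have htc : t * c ≤ ε := by
        have : t ≤ ε / c := min_le_right _ _
        calc t * c ≤ (ε / c) * c := by nlinarith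
          _ = ε := by field_simp
      linarith
  by_contra hcon
  push_neg at hcon
  have := heps ((r + 1 / γ * inner ℝ (x - p) d - s) / 2) (by linarith)
  linarith


/-- Proposition (lower fundamental inequality): for closed, proper, convex
`f, g : H → ℝ ∪ {∞}`, `γ > 0`, a fixed point `z*` of `T_PRS` and `x* = prox_{γg}(z*)`,
for all `x_f ∈ dom f` and `x_g ∈ dom g`:
`f(x_f) + g(x_g) − f(x*) − g(x*) ≥ (1/γ)⟨x_g − x_f, z* − x*⟩`. -/
theorem prs_lower_fundamental_inequality
    {H : Type*} [NormedAddCommGroup H] [InnerProductSpace ℝ H] [CompleteSpace H]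
    (f g : H → EReal)
    (hf_bot : ∀ x, f x ≠ ⊥) (hg_bot : ∀ x, g x ≠ ⊥)
    (hf_proper : ∃ x, f x ≠ ⊤) (hg_proper : ∃ x, g x ≠ ⊤)
    (hf_lsc : LowerSemicontinuous f) (hg_lsc : LowerSemicontinuous g)
    (hf_conv : ∀ x y : H, ∀ a b : ℝ, 0 ≤ a → 0 ≤ b → a + b = 1 →
      f (a • x + b • y) ≤ (a : EReal) * f x + (b : EReal) * f y)
    (hg_conv : ∀ x y : H, ∀ a b : ℝ, 0 ≤ a → 0 ≤ b → a + b = 1 →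
      g (a • x + b • y) ≤ (a : EReal) * g x + (b : EReal) * g y)
    (γ : ℝ) (hγ : 0 < γ)
    (proxf proxg : H → H)
    (hproxf : ∀ x p : H, proxf x = p ↔
      ∀ y : H, f p + ((1 / (2 * γ) * ‖p - x‖ ^ 2 : ℝ) : EReal) ≤
        f y + ((1 / (2 * γ) * ‖y - x‖ ^ 2 : ℝ) : EReal))
    (hproxg : ∀ x p : H, proxg x = p ↔
      ∀ y : H, g p + ((1 / (2 * γ) * ‖p - x‖ ^ 2 : ℝ) : EReal) ≤
        g y + ((1 / (2 * γ) * ‖y - x‖ ^ 2 : ℝ) : EReal))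
    (T : H → H)
    (hT : ∀ w : H, T w = (2 : ℝ) • proxf ((2 : ℝ) • proxg w - w) - ((2 : ℝ) • proxg w - w))
    (zstar : H) (hzstar : T zstar = zstar)
    (xstar : H) (hxstar : xstar = proxg zstar)
    (xf xg : H) (hxf : f xf ≠ ⊤) (hxg : g xg ≠ ⊤) :
    ((1 / γ * (inner ℝ (xg - xf) (zstar - xstar) : ℝ) : ℝ) : EReal) ≤
      f xf + g xg - (f xstar + g xstar) := by
  -- minimizer property for g at zstar
  have hgmin : ∀ y : H, g xstar + ((1 / (2 * γ) * ‖xstar - zstar‖ ^ 2 : ℝ) : EReal) ≤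
      g y + ((1 / (2 * γ) * ‖y - zstar‖ ^ 2 : ℝ) : EReal) :=
    (hproxg zstar xstar).mp hxstar.symm
  -- fixed point: proxf (2•xstar - zstar) = xstar
  set u : H := (2 : ℝ) • xstar - zstar with hu
  have hpf : proxf u = xstar := by
    have h1 := hT zstar
    rw [hzstar, ← hxstar] at h1
    have h2 : (2 : ℝ) • proxf u = (2 : ℝ) • xstar := by
      have h3 := sub_eq_iff_eq_add.mp h1.symm
      rw [h3]
      module
    exact smul_right_injective H two_ne_zero h2
  have hfmin : ∀ y : H, f xstar + ((1 / (2 * γ) * ‖xstar - u‖ ^ 2 : ℝ) : EReal) ≤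
      f y + ((1 / (2 * γ) * ‖y - u‖ ^ 2 : ℝ) : EReal) :=
    (hproxf u xstar).mp hpf
  obtain ⟨rg, sg, hrg, hsg, hg_ineq⟩ :=
    prox_subgrad g hg_bot hg_conv γ hγ zstar xstar hgmin xg hxg
  obtain ⟨rf, sf, hrf, hsf, hf_ineq⟩ :=
    prox_subgrad f hf_bot hf_conv γ hγ u xstar hfmin xf hxf
  have hux : u - xstar = xstar - zstar := by rw [hu]; module
  rw [hux] at hf_ineq
  rw [hsf, hsg, hrf, hrg, ← EReal.coe_add, ← EReal.coe_add, ← EReal.coe_sub]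
  rw [EReal.coe_le_coe_iff]
  have hinner : (inner ℝ (xg - xf) (zstar - xstar) : ℝ) =
      inner ℝ (zstar - xstar) (xg - xstar) + inner ℝ (xstar - zstar) (xf - xstar) := by
    simp only [inner_sub_left, inner_sub_right]
    rw [real_inner_comm zstar xg, real_inner_comm xstar xg, real_inner_comm zstar xf,
      real_inner_comm xstar xf]
    ring
  rw [hinner, mul_add]
  linarith
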